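/- arXiv:2104.00908 — 2 statements merged into one kernel-verified Lean document; each statement's English description precedes it below -/
import Mathlib

section
/- Let K be a field, (A,Φ) a linear extended associative semigroup over K, and (V,*) a Φ-associative algebra. Define a bilinear product ⋆ on V ⊗ A by (x ⊗ a) ⋆ (y ⊗ b) = Σ_i (x *_{d_i} y) ⊗ c_i, where Φ(a⊗b) = Σ_i c_i ⊗ d_i. Then ⋆ is associative. -/
open TensorProduct

section Defs

variable (K : Type) [Field K]
variable (A : Type) [AddCommGroup A] [Module K A]

/-- The "right reassociated" version of `Φ ⊗ Id` acting on `A ⊗ (A ⊗ A)`. -/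
noncomputable def phiIdMap (Φ : A ⊗[K] A →ₗ[K] A ⊗[K] A) :
    A ⊗[K] (A ⊗[K] A) →ₗ[K] A ⊗[K] (A ⊗[K] A) :=
  (TensorProduct.assoc K A A A).toLinearMap ∘ₗ (LinearMap.rTensor A Φ) ∘ₗ
    (TensorProduct.assoc K A A A).symm.toLinearMap

/-- `(A, Φ)` is a linear extended associative semigroup (ℓEAS):
`(Id ⊗ Φ) ∘ (Φ ⊗ Id) ∘ (Id ⊗ Φ) = (Φ ⊗ Id) ∘ (Id ⊗ τ) ∘ (Φ ⊗ Id)` on `A^{⊗3}`. -/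
def IsLEAS (Φ : A ⊗[K] A →ₗ[K] A ⊗[K] A) : Prop :=
  (LinearMap.lTensor A Φ) ∘ₗ phiIdMap K A Φ ∘ₗ (LinearMap.lTensor A Φ)
    = phiIdMap K A Φ ∘ₗ (LinearMap.lTensor A (TensorProduct.comm K A A).toLinearMap) ∘ₗ
        phiIdMap K A Φ

variable (V : Type) [AddCommGroup V] [Module K V]

/-- Evaluation `a ⊗ (x ⊗ y) ↦ x *_a y` of a family of products `st`. -/
noncomputable def evalSt (st : A →ₗ[K] V →ₗ[K] V →ₗ[K] V) :
    A ⊗[K] (V ⊗[K] V) →ₗ[K] V :=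
  TensorProduct.lift ((TensorProduct.lift.equiv (RingHom.id K) V V V).toLinearMap ∘ₗ st)

/-- The Sweedler-type trilinear evaluation
`(c ⊗ d) ⊗ ((x ⊗ y) ⊗ z) ↦ (x *_d y) *_c z`. -/
noncomputable def rightTri (st : A →ₗ[K] V →ₗ[K] V →ₗ[K] V) :
    (A ⊗[K] A) ⊗[K] ((V ⊗[K] V) ⊗[K] V) →ₗ[K] V :=
  evalSt K A V st
    ∘ₗ (TensorProduct.leftComm K V A V).toLinearMap
    ∘ₗ (TensorProduct.map (evalSt K A V st) LinearMap.id)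
    ∘ₗ (TensorProduct.tensorTensorTensorComm K A A (V ⊗[K] V) V).toLinearMap
    ∘ₗ (LinearMap.rTensor ((V ⊗[K] V) ⊗[K] V) (TensorProduct.comm K A A).toLinearMap)

/-- `(V, st)` is a `Φ`-associative algebra:
`x *_a (y *_b z) = Σ (x *_{d_i} y) *_{c_i} z` where `Φ(a ⊗ b) = Σ c_i ⊗ d_i`. -/
def IsPhiAssoc (Φ : A ⊗[K] A →ₗ[K] A ⊗[K] A)
    (st : A →ₗ[K] V →ₗ[K] V →ₗ[K] V) : Prop :=
  ∀ (a b : A) (x y z : V),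
    st a x (st b y z) = rightTri K A V st ((Φ (a ⊗ₜ b)) ⊗ₜ ((x ⊗ₜ y) ⊗ₜ z))

/-- The space `T_A(V) = ⊕_{n≥1} A^{⊗(n−1)} ⊗ V^{⊗n}` of `A`-typed words, modelled as
`V ⊗ T(A ⊗ V)`: the typed word `a₁…a_{n−1}x₁…x_n` is `x₁ ⊗ (a₁⊗x₂)⋯(a_{n−1}⊗x_n)`. -/
abbrev TAlg : Type := V ⊗[K] TensorAlgebra K (A ⊗[K] V)

/-- The inclusion of `V` in `T_A(V)` as typed words of length one. -/
noncomputable def iotaTA : V →ₗ[K] TAlg K A V :=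
  (TensorProduct.mk K V (TensorAlgebra K (A ⊗[K] V))).flip 1

/-- The appending operation: `appTA (a ⊗ z) u = u · (a z)`. -/
noncomputable def appTA : (A ⊗[K] V) →ₗ[K] (TAlg K A V →ₗ[K] TAlg K A V) :=
  (LinearMap.lTensorHom V)
    ∘ₗ (LinearMap.mul K (TensorAlgebra K (A ⊗[K] V))).flip
    ∘ₗ (TensorAlgebra.ι K)

/-- The Sweedler-type map `(c ⊗ d) ⊗ ((u ⊗ v) ⊗ z) ↦ (u *_d v) · (c z)` used in the
recursive definition of the products on `T_A(V)`. -/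
noncomputable def recTA (st : A →ₗ[K] TAlg K A V →ₗ[K] TAlg K A V →ₗ[K] TAlg K A V) :
    (A ⊗[K] A) ⊗[K] ((TAlg K A V ⊗[K] TAlg K A V) ⊗[K] V) →ₗ[K] TAlg K A V :=
  (TensorProduct.lift (appTA K A V).flip)
    ∘ₗ (TensorProduct.map (evalSt K A (TAlg K A V) st) (LinearMap.id (M := A ⊗[K] V)))
    ∘ₗ (TensorProduct.tensorTensorTensorComm K A A (TAlg K A V ⊗[K] TAlg K A V) V).toLinearMap
    ∘ₗ (LinearMap.rTensor ((TAlg K A V ⊗[K] TAlg K A V) ⊗[K] V)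
          (TensorProduct.comm K A A).toLinearMap)

/-- `st` satisfies the defining recursion of the products `*_a` of `T_A(V)`:
`u *_a z = u·(a z)` for `z ∈ V`, and `u *_a (v·(b z)) = Σ (u *_{d_i} v)·(c_i z)`
where `Φ(a ⊗ b) = Σ c_i ⊗ d_i`. -/
def SatisfiesRecTA (Φ : A ⊗[K] A →ₗ[K] A ⊗[K] A)
    (st : A →ₗ[K] TAlg K A V →ₗ[K] TAlg K A V →ₗ[K] TAlg K A V) : Prop :=
  (∀ (a : A) (u : TAlg K A V) (z : V), st a u (iotaTA K A V z) = appTA K A V (a ⊗ₜ z) u) ∧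
  (∀ (a b : A) (u v : TAlg K A V) (z : V),
    st a u (appTA K A V (b ⊗ₜ z) v)
      = recTA K A V st ((Φ (a ⊗ₜ b)) ⊗ₜ ((u ⊗ₜ v) ⊗ₜ z)))

/-- The Sweedler-type map `(x ⊗ y) ⊗ (c ⊗ d) ↦ (x *_d y) ⊗ c` used to define the
associative product `⋆` on `V ⊗ A`. -/
noncomputable def sweedlerMul (st : A →ₗ[K] V →ₗ[K] V →ₗ[K] V) :
    (V ⊗[K] V) ⊗[K] (A ⊗[K] A) →ₗ[K] V ⊗[K] A :=
  (LinearMap.rTensor A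
      (evalSt K A V st ∘ₗ (TensorProduct.comm K (V ⊗[K] V) A).toLinearMap))
    ∘ₗ (TensorProduct.assoc K (V ⊗[K] V) A A).symm.toLinearMap
    ∘ₗ (LinearMap.lTensor (V ⊗[K] V) (TensorProduct.comm K A A).toLinearMap)

end Defs

section AuxProof

variable (K : Type) [Field K] (A : Type) [AddCommGroup A] [Module K A]
variable (V : Type) [AddCommGroup V] [Module K V]
variable (st : A →ₗ[K] V →ₗ[K] V →ₗ[K] V)

lemma sweedlerMul_tmul (x y : V) (c d : A) :
    sweedlerMul K A V st ((x ⊗ₜ y) ⊗ₜ (c ⊗ₜ d)) = (st d x y) ⊗ₜ c := by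
  simp [sweedlerMul, evalSt]

lemma rightTri_tmul (c d : A) (x y z : V) :
    rightTri K A V st ((c ⊗ₜ d) ⊗ₜ ((x ⊗ₜ y) ⊗ₜ z)) = st c (st d x y) z := by
  simp [rightTri, evalSt, TensorProduct.tensorTensorTensorComm, TensorProduct.leftComm,
    TensorProduct.tensorTensorTensorAssoc]

/-- For fixed `x y z`, the map `q ⊗ r ↦ (x *_r y) *_q z`. -/
noncomputable def myF (x y z : V) : A ⊗[K] A →ₗ[K] V :=
  rightTri K A V st ∘ₗ
    (TensorProduct.mk K (A ⊗[K] A) ((V ⊗[K] V) ⊗[K] V)).flip ((x ⊗ₜ y) ⊗ₜ z)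

lemma myF_tmul (x y z : V) (q r : A) :
    myF K A V st x y z (q ⊗ₜ r) = st q (st r x y) z := by
  simp [myF, rightTri_tmul]

lemma myF_apply (x y z : V) (t : A ⊗[K] A) :
    myF K A V st x y z t = rightTri K A V st (t ⊗ₜ ((x ⊗ₜ y) ⊗ₜ z)) := rfl

/-- For fixed `x y z`, the map `p ⊗ (q ⊗ r) ↦ ((x *_r y) *_q z) ⊗ p`. -/
noncomputable def myE (x y z : V) : A ⊗[K] (A ⊗[K] A) →ₗ[K] V ⊗[K] A :=
  (TensorProduct.comm K A V).toLinearMap ∘ₗ LinearMap.lTensor A (myF K A V st x y z)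

lemma myE_tmul (x y z : V) (p : A) (t : A ⊗[K] A) :
    myE K A V st x y z (p ⊗ₜ t) = (myF K A V st x y z t) ⊗ₜ p := by
  simp [myE]

lemma phiIdMap_tmul (Φ : A ⊗[K] A →ₗ[K] A ⊗[K] A) (p q r : A) :
    phiIdMap K A Φ (p ⊗ₜ (q ⊗ₜ r))
      = (TensorProduct.assoc K A A A) ((Φ (p ⊗ₜ q)) ⊗ₜ r) := by
  simp [phiIdMap]

end AuxProof

/-- Proposition 3.3 (1). Let `(A, Φ)` be a linear extended associative
semigroup and `(V, *)` a `Φ`-associative algebra. The bilinear product `⋆` on `V ⊗ A`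
determined by `(x ⊗ a) ⋆ (y ⊗ b) = Σ (x *_{d_i} y) ⊗ c_i`, where
`Φ(a⊗b) = Σ c_i ⊗ d_i`, is associative. -/
theorem phi_assoc_gives_associative_on_tensor
    (K : Type) [Field K] (A : Type) [AddCommGroup A] [Module K A]
    (Φ : A ⊗[K] A →ₗ[K] A ⊗[K] A) (hΦ : IsLEAS K A Φ)
    (V : Type) [AddCommGroup V] [Module K V]
    (st : A →ₗ[K] V →ₗ[K] V →ₗ[K] V) (hst : IsPhiAssoc K A V Φ st)
    (mul : V ⊗[K] A →ₗ[K] V ⊗[K] A →ₗ[K] V ⊗[K] A)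
    (hmul : ∀ (x y : V) (a b : A),
      mul (x ⊗ₜ a) (y ⊗ₜ b) = sweedlerMul K A V st ((x ⊗ₜ y) ⊗ₜ (Φ (a ⊗ₜ b)))) :
    ∀ u v w : V ⊗[K] A, mul (mul u v) w = mul u (mul v w) := by
  -- core lemma 1: inner sub-lemma for the left association
  have core1 : ∀ (x y z : V) (q : A) (s : A ⊗[K] A),
      sweedlerMul K A V st (((st q x y) ⊗ₜ z) ⊗ₜ s)
        = myE K A V st x y z ((TensorProduct.assoc K A A A) (s ⊗ₜ q)) := by
    intro x y z q s
    induction s using TensorProduct.induction_on with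
    | zero => simp
    | tmul u v => simp [sweedlerMul_tmul, myE_tmul, myF_tmul]
    | add s t hs ht =>
      simp only [TensorProduct.tmul_add, TensorProduct.add_tmul, map_add, LinearMap.add_apply, hs, ht]
  -- core lemma 2: inner sub-lemma for the right association (uses hst)
  have core2 : ∀ (x y z : V) (q : A) (s : A ⊗[K] A),
      sweedlerMul K A V st ((x ⊗ₜ (st q y z)) ⊗ₜ s)
        = myE K A V st x y z
            ((LinearMap.lTensor A Φ) ((TensorProduct.assoc K A A A) (s ⊗ₜ q))) := by
    intro x y z q s
    induction s using TensorProduct.induction_on with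
    | zero => simp
    | tmul u v =>
      simp only [TensorProduct.assoc_tmul, LinearMap.lTensor_tmul, myE_tmul,
        sweedlerMul_tmul, myF_apply]
      rw [← hst v q x y z]
    | add s t hs ht =>
      simp only [TensorProduct.tmul_add, TensorProduct.add_tmul, map_add, LinearMap.add_apply, hs, ht]
  -- outer lemma 1
  have lem1 : ∀ (x y z : V) (c : A) (t : A ⊗[K] A),
      mul (sweedlerMul K A V st ((x ⊗ₜ y) ⊗ₜ t)) (z ⊗ₜ c)
        = myE K A V st x y z
            ((phiIdMap K A Φ)
              ((LinearMap.lTensor A (TensorProduct.comm K A A).toLinearMap)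
                ((TensorProduct.assoc K A A A) (t ⊗ₜ c)))) := by
    intro x y z c t
    induction t using TensorProduct.induction_on with
    | zero => simp
    | tmul p q =>
      rw [sweedlerMul_tmul, hmul, core1]
      simp [phiIdMap_tmul]
    | add s t hs ht =>
      simp only [TensorProduct.tmul_add, TensorProduct.add_tmul, map_add, LinearMap.add_apply, hs, ht]
  -- outer lemma 2
  have lem2 : ∀ (x y z : V) (a : A) (t : A ⊗[K] A),
      mul (x ⊗ₜ a) (sweedlerMul K A V st ((y ⊗ₜ z) ⊗ₜ t))
        = myE K A V st x y z
            ((LinearMap.lTensor A Φ) ((phiIdMap K A Φ) (a ⊗ₜ t))) := by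
    intro x y z a t
    induction t using TensorProduct.induction_on with
    | zero => simp
    | tmul p q =>
      rw [sweedlerMul_tmul, hmul, core2, phiIdMap_tmul]
    | add s t hs ht =>
      simp only [TensorProduct.tmul_add, TensorProduct.add_tmul, map_add, LinearMap.add_apply, hs, ht]
  -- the key identity on pure tensors
  have key : ∀ (x y z : V) (a b c : A),
      mul (mul (x ⊗ₜ a) (y ⊗ₜ b)) (z ⊗ₜ c)
        = mul (x ⊗ₜ a) (mul (y ⊗ₜ b) (z ⊗ₜ c)) := by
    intro x y z a b c
    rw [hmul x y a b, hmul y z b c, lem1, lem2]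
    have h1 : (TensorProduct.assoc K A A A) ((Φ (a ⊗ₜ b)) ⊗ₜ c)
        = phiIdMap K A Φ (a ⊗ₜ (b ⊗ₜ c)) := by
      simp [phiIdMap]
    have h2 : (a ⊗ₜ[K] (Φ (b ⊗ₜ c)))
        = (LinearMap.lTensor A Φ) (a ⊗ₜ (b ⊗ₜ c)) := by
      simp
    rw [h1, h2]
    have := congrArg (fun f => myE K A V st x y z
      (f (a ⊗ₜ[K] (b ⊗ₜ[K] c)))) hΦ
    simpa using this.symm
  -- extend by trilinearity
  intro u v w
  induction u using TensorProduct.induction_on with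
  | zero => simp
  | add u₁ u₂ h₁ h₂ => simp [map_add, LinearMap.add_apply, h₁, h₂]
  | tmul x a =>
    induction v using TensorProduct.induction_on with
    | zero => simp
    | add v₁ v₂ h₁ h₂ => simp [map_add, LinearMap.add_apply, h₁, h₂]
    | tmul y b =>
      induction w using TensorProduct.induction_on with
      | zero => simp
      | add w₁ w₂ h₁ h₂ => simp [map_add, h₁, h₂]
      | tmul z c => exact key x y z a b c
end

section
/- Let K be a field, (A,Φ) a linear extended associative semigroup over K, and V a nonzero K-vector space. Equip T_A(V) = ⊕_{n≥1} A^{⊗(n−1)} ⊗ V^{⊗n} with the recursively defined products *_a (u *_a z = u·(a z) for z ∈ V; u *_a (v·(b z)) = Σ_i (u *_{d_i} v)·(c_i z) where Φ(a⊗b) = Σ_i c_i ⊗ d_i), and equip T_A(V) ⊗ A with the associative product ⋆ given by (u ⊗ a) ⋆ (v ⊗ b) = Σ_i (u *_{d_i} v) ⊗ c_i. Then the (non-unital) subalgebra of (T_A(V) ⊗ A, ⋆) generated by V ⊗ A equals all of T_A(V) ⊗ A if, and only if, Φ is surjective. -/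
open TensorProduct

section Aux

variable {K : Type} [Field K] {A : Type} [AddCommGroup A] [Module K A]
  {V : Type} [AddCommGroup V] [Module K V]

lemma iotaTA_apply (z : V) : iotaTA K A V z = z ⊗ₜ 1 := rfl

lemma evalSt_apply {W : Type} [AddCommGroup W] [Module K W]
    (st : A →ₗ[K] W →ₗ[K] W →ₗ[K] W) (a : A) (x y : W) :
    evalSt K A W st (a ⊗ₜ (x ⊗ₜ y)) = st a x y := by
  simp [evalSt]

lemma appTA_apply (t : A ⊗[K] V) (x : V) (m : TensorAlgebra K (A ⊗[K] V)) :
    appTA K A V t (x ⊗ₜ m) = x ⊗ₜ (m * TensorAlgebra.ι K t) := by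
  simp [appTA]

lemma sweedlerMul_apply (st : A →ₗ[K] TAlg K A V →ₗ[K] TAlg K A V →ₗ[K] TAlg K A V)
    (u v : TAlg K A V) (c d : A) :
    sweedlerMul K A (TAlg K A V) st ((u ⊗ₜ v) ⊗ₜ (c ⊗ₜ d)) = (st d u v) ⊗ₜ c := by
  simp [sweedlerMul, evalSt_apply]

lemma recTA_apply (st : A →ₗ[K] TAlg K A V →ₗ[K] TAlg K A V →ₗ[K] TAlg K A V)
    (c d : A) (u v : TAlg K A V) (z : V) :
    recTA K A V st ((c ⊗ₜ d) ⊗ₜ ((u ⊗ₜ v) ⊗ₜ z)) = appTA K A V (c ⊗ₜ z) (st d u v) := by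
  simp [recTA, tensorTensorTensorComm, evalSt_apply]

/-- membership of images of a linear map on a tensor product via elementary tensors -/
lemma mem_of_tmul {M N X : Type} [AddCommGroup M] [Module K M] [AddCommGroup N] [Module K N]
    [AddCommGroup X] [Module K X] (S : Submodule K X) (φ : M ⊗[K] N →ₗ[K] X)
    (h : ∀ m n, φ (m ⊗ₜ n) ∈ S) : ∀ t, φ t ∈ S := by
  intro t
  induction t using TensorProduct.induction_on with
  | zero => simpa using S.zero_mem
  | tmul m n => exact h m n
  | add s t hs ht => rw [map_add]; exact S.add_mem hs ht

/-- A submodule of `T_A(V)` containing the length-one words and stable under appending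
is everything. -/
lemma spanTA (T' : Submodule K (TAlg K A V))
    (h1 : ∀ z : V, iotaTA K A V z ∈ T')
    (h2 : ∀ (t : A ⊗[K] V), ∀ u ∈ T', appTA K A V t u ∈ T') : T' = ⊤ := by
  -- the submodule of tensor algebra elements m with x ⊗ m ∈ T' for all x
  set M : Submodule K (TensorAlgebra K (A ⊗[K] V)) :=
    { carrier := {m | ∀ x : V, x ⊗ₜ m ∈ T'}
      add_mem' := by
        intro m n hm hn x
        have : x ⊗ₜ[K] (m + n) = x ⊗ₜ m + x ⊗ₜ n := TensorProduct.tmul_add x m n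
        rw [this]; exact T'.add_mem (hm x) (hn x)
      zero_mem' := by intro x; rw [TensorProduct.tmul_zero]; exact T'.zero_mem
      smul_mem' := by
        intro c m hm x
        rw [TensorProduct.tmul_smul]; exact T'.smul_mem c (hm x) } with hM
  have hone : (1 : TensorAlgebra K (A ⊗[K] V)) ∈ M := by
    intro x; exact h1 x
  have hmul : ∀ m ∈ M, ∀ t : A ⊗[K] V, m * TensorAlgebra.ι K t ∈ M := by
    intro m hm t x
    have := h2 t (x ⊗ₜ m) (hm x)
    rwa [appTA_apply] at this
  have hMtop : ∀ y : TensorAlgebra K (A ⊗[K] V), ∀ m ∈ M, m * y ∈ M := by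
    intro y
    induction y using TensorAlgebra.induction with
    | algebraMap r =>
        intro m hm
        have : m * (algebraMap K (TensorAlgebra K (A ⊗[K] V)) r) = r • m := by
          rw [Algebra.algebraMap_eq_smul_one, mul_smul_comm, mul_one]
        rw [this]; exact M.smul_mem r hm
    | ι t => intro m hm; exact hmul m hm t
    | mul a b ha hb => intro m hm; rw [← mul_assoc]; exact hb _ (ha m hm)
    | add a b ha hb =>
        intro m hm; rw [mul_add]; exact M.add_mem (ha m hm) (hb m hm)
  have hMall : ∀ m : TensorAlgebra K (A ⊗[K] V), m ∈ M := by
    intro m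
    have := hMtop m 1 hone
    rwa [one_mul] at this
  rw [eq_top_iff]
  rintro u -
  induction u using TensorProduct.induction_on with
  | zero => exact T'.zero_mem
  | tmul x m => exact hMall m x
  | add s t hs ht => exact T'.add_mem hs ht

end Aux

section Dir1

variable {K : Type} [Field K] {A : Type} [AddCommGroup A] [Module K A]
  {V : Type} [AddCommGroup V] [Module K V]

lemma dir_surj_to_top (Φ : A ⊗[K] A →ₗ[K] A ⊗[K] A)
    (st : A →ₗ[K] TAlg K A V →ₗ[K] TAlg K A V →ₗ[K] TAlg K A V)
    (hst : SatisfiesRecTA K A V Φ st)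
    (mul : TAlg K A V ⊗[K] A →ₗ[K] TAlg K A V ⊗[K] A →ₗ[K] TAlg K A V ⊗[K] A)
    (hmul : ∀ (u v : TAlg K A V) (a b : A),
      mul (u ⊗ₜ a) (v ⊗ₜ b) = sweedlerMul K A (TAlg K A V) st ((u ⊗ₜ v) ⊗ₜ (Φ (a ⊗ₜ b))))
    (hsurj : Function.Surjective Φ)
    (S : Submodule K (TAlg K A V ⊗[K] A))
    (hgen : ∀ (z : V) (a : A), (iotaTA K A V z) ⊗ₜ a ∈ S)
    (hclosed : ∀ u ∈ S, ∀ v ∈ S, mul u v ∈ S) : S = ⊤ := by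
  set T' : Submodule K (TAlg K A V) :=
    { carrier := {u | ∀ a : A, u ⊗ₜ a ∈ S}
      add_mem' := by
        intro u v hu hv a
        rw [TensorProduct.add_tmul]; exact S.add_mem (hu a) (hv a)
      zero_mem' := by intro a; rw [TensorProduct.zero_tmul]; exact S.zero_mem
      smul_mem' := by
        intro c u hu a
        rw [← TensorProduct.smul_tmul']; exact S.smul_mem c (hu a) } with hT'
  have hTtop : T' = ⊤ := by
    apply spanTA
    · intro z a; exact hgen z a
    · -- stability under appending
      have helem : ∀ (b : A) (z : V), ∀ u ∈ T', appTA K A V (b ⊗ₜ z) u ∈ T' := by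
        intro b z u hu a
        -- a ⊗ b is in the range of Φ
        obtain ⟨t, ht⟩ := hsurj (a ⊗ₜ b)
        -- the map s ↦ sweedlerMul ((u ⊗ v) ⊗ Φ s) lands in S for all s
        have key : ∀ s : A ⊗[K] A,
            (sweedlerMul K A (TAlg K A V) st ∘ₗ
              (TensorProduct.mk K (TAlg K A V ⊗[K] TAlg K A V) (A ⊗[K] A)
                (u ⊗ₜ iotaTA K A V z)) ∘ₗ Φ) s ∈ S := by
          apply mem_of_tmul
          intro a' b'
          have : (sweedlerMul K A (TAlg K A V) st ∘ₗ
              (TensorProduct.mk K (TAlg K A V ⊗[K] TAlg K A V) (A ⊗[K] A)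
                (u ⊗ₜ iotaTA K A V z)) ∘ₗ Φ) (a' ⊗ₜ b')
              = mul (u ⊗ₜ a') ((iotaTA K A V z) ⊗ₜ b') := by
            simp only [LinearMap.comp_apply, TensorProduct.mk_apply, hmul]
          rw [this]
          exact hclosed _ (hu a') _ (hgen z b')
        have := key t
        simp only [LinearMap.comp_apply, TensorProduct.mk_apply, ht] at this
        rwa [sweedlerMul_apply, hst.1] at this
      intro t u hu
      have : ((appTA K A V).flip u) t ∈ T' := by
        apply mem_of_tmul (S := T') (φ := (appTA K A V).flip u)
        intro b z
        exact helem b z u hu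
      exact this
  rw [eq_top_iff]
  rintro p -
  induction p using TensorProduct.induction_on with
  | zero => exact S.zero_mem
  | tmul u a =>
      have hu : u ∈ T' := hTtop ▸ Submodule.mem_top
      exact hu a
  | add s t hs ht => exact S.add_mem hs ht

end Dir1

section Proj

variable (K : Type) [Field K] (M : Type) [AddCommGroup M] [Module K M]

noncomputable instance opModAux : Module Kᵐᵒᵖ M :=
  Module.compHom M ((RingHom.id K).fromOpposite mul_comm)

instance centralAux : IsCentralScalar K M := ⟨fun _ _ => rfl⟩

/-- degree-zero projection of the tensor algebra -/
noncomputable def pZero : TensorAlgebra K M →ₗ[K] K where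
  toFun m := (TensorAlgebra.toTrivSqZeroExt (R := K) (M := M) m).fst
  map_add' x y := by simp
  map_smul' r x := by simp

/-- degree-one projection of the tensor algebra -/
noncomputable def pOne : TensorAlgebra K M →ₗ[K] M :=
  (TrivSqZeroExt.sndHom K M) ∘ₗ (TensorAlgebra.toTrivSqZeroExt (R := K) (M := M)).toLinearMap

variable {K M}

lemma pZero_one : pZero K M 1 = 1 := by simp [pZero]
lemma pOne_one : pOne K M 1 = 0 := by simp [pOne]
lemma pOne_iota (t : M) : pOne K M (TensorAlgebra.ι K t) = t := by simp [pOne]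
lemma pZero_mul_iota (m : TensorAlgebra K M) (t : M) :
    pZero K M (m * TensorAlgebra.ι K t) = 0 := by
  simp [pZero, TrivSqZeroExt.fst_mul]
lemma pOne_mul_iota (m : TensorAlgebra K M) (t : M) :
    pOne K M (m * TensorAlgebra.ι K t) = pZero K M m • t := by
  simp [pZero, pOne, TrivSqZeroExt.snd_mul]

end Proj

section Proj2

variable {K : Type} [Field K] {A : Type} [AddCommGroup A] [Module K A]
  {V : Type} [AddCommGroup V] [Module K V]

/-- extraction of the length-one component of a typed word, as an element of `V` -/
noncomputable def Pz : TAlg K A V →ₗ[K] V :=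
  (TensorProduct.rid K V).toLinearMap ∘ₗ LinearMap.lTensor V (pZero K (A ⊗[K] V))

/-- extraction of the length-two component of `T_A(V) ⊗ A` -/
noncomputable def Ptwo : TAlg K A V →ₗ[K] V ⊗[K] (A ⊗[K] V) :=
  LinearMap.lTensor V (pOne K (A ⊗[K] V))

lemma Pz_tmul (x : V) (m : TensorAlgebra K (A ⊗[K] V)) :
    Pz (x ⊗ₜ m) = pZero K (A ⊗[K] V) m • x := by
  simp [Pz]

lemma Pz_iota (z : V) : Pz (iotaTA K A V z) = z := by
  rw [iotaTA_apply, Pz_tmul, pZero_one, one_smul]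

lemma Pz_app (t : A ⊗[K] V) (u : TAlg K A V) : Pz (appTA K A V t u) = 0 := by
  induction u using TensorProduct.induction_on with
  | zero => simp
  | tmul x m => rw [appTA_apply, Pz_tmul, pZero_mul_iota, zero_smul]
  | add s r hs hr => rw [map_add, map_add, hs, hr, add_zero]

lemma Ptwo_app (t : A ⊗[K] V) (u : TAlg K A V) :
    Ptwo (appTA K A V t u) = (Pz u) ⊗ₜ t := by
  induction u using TensorProduct.induction_on with
  | zero => simp
  | tmul x m =>
      rw [appTA_apply, Pz_tmul]
      show x ⊗ₜ pOne K (A ⊗[K] V) (m * TensorAlgebra.ι K t) = _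
      rw [pOne_mul_iota]
      exact (TensorProduct.smul_tmul _ _ _).symm
  | add s r hs hr =>
      rw [map_add, map_add, hs, hr, map_add, TensorProduct.add_tmul]

lemma Ptwo_iota (z : V) : Ptwo (iotaTA K A V z : TAlg K A V) = 0 := by
  rw [iotaTA_apply]
  show z ⊗ₜ pOne K (A ⊗[K] V) 1 = 0
  rw [pOne_one, TensorProduct.tmul_zero]

variable (Φ : A ⊗[K] A →ₗ[K] A ⊗[K] A)
  (st : A →ₗ[K] TAlg K A V →ₗ[K] TAlg K A V →ₗ[K] TAlg K A V)
  (hst : SatisfiesRecTA K A V Φ st)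

include hst

lemma Pz_st (a : A) (u v : TAlg K A V) : Pz (st a u v) = 0 := by
  have : LinearMap.ker (Pz ∘ₗ (st a u)) = ⊤ := by
    apply spanTA
    · intro z
      rw [LinearMap.mem_ker, LinearMap.comp_apply, hst.1, Pz_app]
    · intro t v _
      have : ((Pz ∘ₗ (st a u)) ∘ₗ ((appTA K A V).flip v)) t ∈ (⊥ : Submodule K V) := by
        apply mem_of_tmul
        intro b z
        simp only [LinearMap.comp_apply, LinearMap.flip_apply, Submodule.mem_bot]
        rw [hst.2]
        have : ((Pz ∘ₗ recTA K A V st) ∘ₗ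
            (TensorProduct.mk K (A ⊗[K] A) ((TAlg K A V ⊗[K] TAlg K A V) ⊗[K] V)).flip
              ((u ⊗ₜ v) ⊗ₜ z)) (Φ (a ⊗ₜ b)) ∈ (⊥ : Submodule K V) := by
          apply mem_of_tmul
          intro c d
          simp only [LinearMap.comp_apply, LinearMap.flip_apply, TensorProduct.mk_apply,
            Submodule.mem_bot]
          rw [recTA_apply, Pz_app]
        simpa using this
      simpa using this
  have hm : v ∈ LinearMap.ker (Pz ∘ₗ (st a u)) := by
    rw [this]; exact Submodule.mem_top
  simpa using hm

end Proj2

section Proj3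

variable {K : Type} [Field K] {A : Type} [AddCommGroup A] [Module K A]
  {V : Type} [AddCommGroup V] [Module K V]
  (Φ : A ⊗[K] A →ₗ[K] A ⊗[K] A)
  (st : A →ₗ[K] TAlg K A V →ₗ[K] TAlg K A V →ₗ[K] TAlg K A V)
  (hst : SatisfiesRecTA K A V Φ st)

include hst

lemma Ptwo_st (a : A) (u v : TAlg K A V) :
    Ptwo (st a u v) = (Pz u) ⊗ₜ (a ⊗ₜ (Pz v)) := by
  set rhs : TAlg K A V →ₗ[K] V ⊗[K] (A ⊗[K] V) :=
    (TensorProduct.mk K V (A ⊗[K] V) (Pz u)) ∘ₗ (TensorProduct.mk K A V a) ∘ₗ Pz with hrhs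
  have hker : LinearMap.ker ((Ptwo ∘ₗ st a u) - rhs) = ⊤ := by
    apply spanTA
    · intro z
      rw [LinearMap.mem_ker, LinearMap.sub_apply, LinearMap.comp_apply, hst.1, Ptwo_app]
      simp [rhs, Pz_iota]
    · intro t v' _
      have : (((Ptwo ∘ₗ st a u) - rhs) ∘ₗ (appTA K A V).flip v') t
          ∈ (⊥ : Submodule K (V ⊗[K] (A ⊗[K] V))) := by
        apply mem_of_tmul
        intro b z
        simp only [LinearMap.comp_apply, LinearMap.flip_apply, LinearMap.sub_apply,
          Submodule.mem_bot]
        have h2 : rhs (appTA K A V (b ⊗ₜ z) v') = 0 := by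
          simp [rhs, Pz_app]
        rw [h2, sub_zero, hst.2]
        have : ((Ptwo ∘ₗ recTA K A V st) ∘ₗ
            (TensorProduct.mk K (A ⊗[K] A) ((TAlg K A V ⊗[K] TAlg K A V) ⊗[K] V)).flip
              ((u ⊗ₜ v') ⊗ₜ z)) (Φ (a ⊗ₜ b)) ∈ (⊥ : Submodule K (V ⊗[K] (A ⊗[K] V))) := by
          apply mem_of_tmul
          intro c d
          simp only [LinearMap.comp_apply, LinearMap.flip_apply, TensorProduct.mk_apply,
            Submodule.mem_bot]
          rw [recTA_apply, Ptwo_app, Pz_st Φ st hst, TensorProduct.zero_tmul]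
        simpa using this
      simpa using this
  have hm : v ∈ LinearMap.ker ((Ptwo ∘ₗ st a u) - rhs) := by
    rw [hker]; exact Submodule.mem_top
  have := LinearMap.mem_ker.mp hm
  rw [LinearMap.sub_apply, sub_eq_zero] at this
  simpa [rhs] using this

end Proj3

section Fun

variable {K : Type} [Field K] {A : Type} [AddCommGroup A] [Module K A]
  {V : Type} [AddCommGroup V] [Module K V]

noncomputable def Ffun (f : V →ₗ[K] K) (g : A ⊗[K] A →ₗ[K] K) :
    (V ⊗[K] (A ⊗[K] V)) ⊗[K] A →ₗ[K] K :=
  g ∘ₗ (TensorProduct.comm K A A).toLinearMap ∘ₗ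
    LinearMap.rTensor A ((TensorProduct.lid K A).toLinearMap ∘ₗ
      TensorProduct.map f ((TensorProduct.rid K A).toLinearMap ∘ₗ LinearMap.lTensor A f))

lemma Ffun_tmul (f : V →ₗ[K] K) (g : A ⊗[K] A →ₗ[K] K) (x' y : V) (d c : A) :
    Ffun f g ((x' ⊗ₜ (d ⊗ₜ y)) ⊗ₜ c) = (f x' * f y) • g (c ⊗ₜ d) := by
  have h1 : Ffun f g ((x' ⊗ₜ (d ⊗ₜ y)) ⊗ₜ c)
      = g ((TensorProduct.comm K A A) (((f x' • (f y • d)) : A) ⊗ₜ c)) := by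
    simp only [Ffun, LinearMap.comp_apply, LinearEquiv.coe_coe, LinearMap.rTensor_tmul,
      TensorProduct.map_tmul, LinearMap.lTensor_tmul, TensorProduct.rid_tmul,
      TensorProduct.lid_tmul]
  rw [h1, TensorProduct.comm_tmul, TensorProduct.tmul_smul, TensorProduct.tmul_smul,
    map_smul, map_smul, smul_smul]

noncomputable def Jmap (x : V) : A ⊗[K] A →ₗ[K] TAlg K A V ⊗[K] A :=
  (TensorProduct.map ((TensorProduct.mk K V (TensorAlgebra K (A ⊗[K] V)) x) ∘ₗ
      (TensorAlgebra.ι K) ∘ₗ ((TensorProduct.mk K A V).flip x)) LinearMap.id)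
    ∘ₗ (TensorProduct.comm K A A).toLinearMap

lemma Jmap_tmul (x : V) (c d : A) :
    Jmap x (c ⊗ₜ d) = (x ⊗ₜ TensorAlgebra.ι K (d ⊗ₜ x)) ⊗ₜ c := by
  simp [Jmap]

end Fun

lemma exists_dual_one {K M : Type} [Field K] [AddCommGroup M] [Module K M]
    (x : M) (hx : x ≠ 0) : ∃ f : M →ₗ[K] K, f x = 1 := by
  let e := LinearEquiv.toSpanNonzeroSingleton K M x hx
  obtain ⟨g, hg⟩ := LinearMap.exists_extend e.symm.toLinearMap
  refine ⟨g, ?_⟩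
  have hmem : x ∈ Submodule.span K {x} := Submodule.mem_span_singleton_self x
  have h1 : e 1 = ⟨x, hmem⟩ := by
    apply Subtype.ext
    simp [e, LinearEquiv.toSpanNonzeroSingleton]
  have hgx : g x = (e.symm.toLinearMap) ⟨x, hmem⟩ := by
    have := congrArg (fun h => h ⟨x, hmem⟩) hg
    simpa using this
  rw [hgx, ← h1]; exact e.symm_apply_apply 1

section Dir2

variable {K : Type} [Field K] {A : Type} [AddCommGroup A] [Module K A]
  {V : Type} [AddCommGroup V] [Module K V]

lemma Ptwo_tmul (x : V) (m : TensorAlgebra K (A ⊗[K] V)) :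
    (Ptwo (x ⊗ₜ m) : V ⊗[K] (A ⊗[K] V)) = x ⊗ₜ pOne K (A ⊗[K] V) m := by
  simp [Ptwo]

lemma dir_top_to_surj [Nontrivial V] (Φ : A ⊗[K] A →ₗ[K] A ⊗[K] A)
    (st : A →ₗ[K] TAlg K A V →ₗ[K] TAlg K A V →ₗ[K] TAlg K A V)
    (hst : SatisfiesRecTA K A V Φ st)
    (mul : TAlg K A V ⊗[K] A →ₗ[K] TAlg K A V ⊗[K] A →ₗ[K] TAlg K A V ⊗[K] A)
    (hmul : ∀ (u v : TAlg K A V) (a b : A),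
      mul (u ⊗ₜ a) (v ⊗ₜ b) = sweedlerMul K A (TAlg K A V) st ((u ⊗ₜ v) ⊗ₜ (Φ (a ⊗ₜ b))))
    (H : ∀ S : Submodule K (TAlg K A V ⊗[K] A),
        (∀ (z : V) (a : A), (iotaTA K A V z) ⊗ₜ a ∈ S) →
        (∀ u ∈ S, ∀ v ∈ S, mul u v ∈ S) →
        S = ⊤) :
    Function.Surjective Φ := by
  by_contra hns
  have hrange : LinearMap.range Φ ≠ ⊤ := fun h => hns (LinearMap.range_eq_top.mp h)
  obtain ⟨w, hw⟩ : ∃ w, w ∉ LinearMap.range Φ := by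
    by_contra h; push_neg at h
    exact hrange (Submodule.eq_top_iff'.mpr h)
  obtain ⟨x, hx⟩ := exists_ne (0 : V)
  obtain ⟨f, hf⟩ := exists_dual_one (K := K) x hx
  have hwbar : (LinearMap.range Φ).mkQ w ≠ 0 := by
    simpa [Submodule.Quotient.mk_eq_zero] using hw
  obtain ⟨f₁, hf₁⟩ := exists_dual_one (K := K) _ hwbar
  set g : A ⊗[K] A →ₗ[K] K := f₁ ∘ₗ (LinearMap.range Φ).mkQ with hg
  have hgΦ : ∀ t, g (Φ t) = 0 := by
    intro t
    have h0 : (LinearMap.range Φ).mkQ (Φ t) = 0 := by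
      simpa [Submodule.Quotient.mk_eq_zero] using ⟨t, rfl⟩
    rw [hg, LinearMap.comp_apply, h0, map_zero]
  have hgw : g w = 1 := hf₁
  set F : (V ⊗[K] (A ⊗[K] V)) ⊗[K] A →ₗ[K] K := Ffun f g with hF
  set π : TAlg K A V ⊗[K] A →ₗ[K] (V ⊗[K] (A ⊗[K] V)) ⊗[K] A :=
    LinearMap.rTensor A (Ptwo (K := K) (A := A) (V := V)) with hπ
  have KL1 : ∀ (u v : TAlg K A V) (s : A ⊗[K] A),
      F (π (sweedlerMul K A (TAlg K A V) st ((u ⊗ₜ v) ⊗ₜ s)))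
        = (f (Pz u) * f (Pz v)) • g s := by
    intro u v s
    induction s using TensorProduct.induction_on with
    | zero => rw [TensorProduct.tmul_zero, map_zero, map_zero, map_zero, map_zero, smul_zero]
    | tmul c d =>
        rw [sweedlerMul_apply, hπ, LinearMap.rTensor_tmul, Ptwo_st Φ st hst, hF, Ffun_tmul]
    | add s1 s2 h1 h2 =>
        rw [TensorProduct.tmul_add, map_add, map_add, map_add, map_add, smul_add, h1, h2]
  have KL : ∀ p q, F (π (mul p q)) = 0 := by
    intro p q
    induction p using TensorProduct.induction_on with
    | zero => rw [map_zero, LinearMap.zero_apply, map_zero, map_zero]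
    | tmul u a =>
        induction q using TensorProduct.induction_on with
        | zero => rw [map_zero, map_zero, map_zero]
        | tmul v b => rw [hmul, KL1, hgΦ, smul_zero]
        | add q1 q2 h1 h2 => rw [map_add, map_add, map_add, h1, h2, add_zero]
    | add p1 p2 h1 h2 =>
        rw [map_add, LinearMap.add_apply, map_add, map_add, h1, h2, add_zero]
  have hgen : ∀ (z : V) (a : A), (iotaTA K A V z) ⊗ₜ a ∈ LinearMap.ker (F ∘ₗ π) := by
    intro z a
    rw [LinearMap.mem_ker, LinearMap.comp_apply, hπ, LinearMap.rTensor_tmul, Ptwo_iota,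
      TensorProduct.zero_tmul, map_zero]
  have hclosed : ∀ u ∈ LinearMap.ker (F ∘ₗ π), ∀ v ∈ LinearMap.ker (F ∘ₗ π),
      mul u v ∈ LinearMap.ker (F ∘ₗ π) := by
    intro u _ v _
    rw [LinearMap.mem_ker, LinearMap.comp_apply]
    exact KL u v
  have hStop := H _ hgen hclosed
  have hJ : ∀ s : A ⊗[K] A, F (π (Jmap x s)) = g s := by
    intro s
    induction s using TensorProduct.induction_on with
    | zero => rw [map_zero, map_zero, map_zero, map_zero]
    | tmul c d =>
        rw [Jmap_tmul, hπ, LinearMap.rTensor_tmul, Ptwo_tmul, pOne_iota, hF, Ffun_tmul, hf,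
          one_mul, one_smul]
    | add s1 s2 h1 h2 => rw [map_add, map_add, map_add, map_add, h1, h2]
  have hmemJ : Jmap x w ∈ LinearMap.ker (F ∘ₗ π) := by
    rw [hStop]; exact Submodule.mem_top
  have h0 : F (π (Jmap x w)) = 0 := by
    have := LinearMap.mem_ker.mp hmemJ
    rwa [LinearMap.comp_apply] at this
  rw [hJ, hgw] at h0
  exact one_ne_zero h0

end Dir2

/-- Proposition 3.4 (1). Let `(A, Φ)` be a linear extended associative
semigroup, `V` a nonzero vector space, `T_A(V)` the free `Φ`-associative algebra with its
recursively defined products `*_a`, and `⋆` the associated associative product on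
`T_A(V) ⊗ A` given by `(u ⊗ a) ⋆ (v ⊗ b) = Σ (u *_{d_i} v) ⊗ c_i` where
`Φ(a⊗b) = Σ c_i ⊗ d_i`. Then the subalgebra of `(T_A(V) ⊗ A, ⋆)` generated by `V ⊗ A`
(embedded via length-one typed words) is all of `T_A(V) ⊗ A` if, and only if, `Φ` is
surjective. -/
theorem generated_by_VA_iff_surjective
    (K : Type) [Field K] (A : Type) [AddCommGroup A] [Module K A]
    (Φ : A ⊗[K] A →ₗ[K] A ⊗[K] A) (hΦ : IsLEAS K A Φ)
    (V : Type) [AddCommGroup V] [Module K V] [Nontrivial V]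
    (st : A →ₗ[K] TAlg K A V →ₗ[K] TAlg K A V →ₗ[K] TAlg K A V)
    (hst : SatisfiesRecTA K A V Φ st)
    (mul : TAlg K A V ⊗[K] A →ₗ[K] TAlg K A V ⊗[K] A →ₗ[K] TAlg K A V ⊗[K] A)
    (hmul : ∀ (u v : TAlg K A V) (a b : A),
      mul (u ⊗ₜ a) (v ⊗ₜ b) = sweedlerMul K A (TAlg K A V) st ((u ⊗ₜ v) ⊗ₜ (Φ (a ⊗ₜ b)))) :
    (∀ S : Submodule K (TAlg K A V ⊗[K] A),
        (∀ (z : V) (a : A), (iotaTA K A V z) ⊗ₜ a ∈ S) →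
        (∀ u ∈ S, ∀ v ∈ S, mul u v ∈ S) →
        S = ⊤)
      ↔ Function.Surjective Φ := by
  constructor
  · intro H
    exact dir_top_to_surj Φ st hst mul hmul H
  · intro hsurj S hgen hclosed
    exact dir_surj_to_top Φ st hst mul hmul hsurj S hgen hclosed
end
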